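/- Let I ≠ 0 be a stable monomial ideal generated in degree d and m = (x₁,...,x_n). Then m^d is strongly linear over I, i.e., there is a chain I = I₀ ⊆ I₁ ⊆ ... ⊆ I_s = m^d where each I_{j+1} = I_j + v_j·m for some monomial v_j of degree d−1 with I_j : v_j generated by variables. -/

import Mathlib

open MvPolynomial

/-- The monomial `x^u` in the polynomial ring `K[x_i : i ∈ σ]`. -/
noncomputable def mon (K : Type) [Field K] {σ : Type} (u : σ →₀ ℕ) :
    MvPolynomial σ K := MvPolynomial.monomial u 1

/-- Total degree of an exponent vector. -/
def mdeg {σ : Type} (u : σ →₀ ℕ) : ℕ := u.sum fun _ e => e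

/-- The monomial ideal generated by the monomials with exponent vectors in `S`. -/
noncomputable def monIdeal (K : Type) [Field K] {σ : Type} (S : Set (σ →₀ ℕ)) :
    Ideal (MvPolynomial σ K) := Ideal.span ((mon K) '' S)

/-- An ideal is generated by variables. -/
def genByVars {K : Type} [Field K] {σ : Type} (J : Ideal (MvPolynomial σ K)) : Prop :=
  ∃ A : Set σ, J = Ideal.span ((fun i => (X i : MvPolynomial σ K)) '' A)

/-- An ideal is generated by linear forms. -/
def genByLinForms {K : Type} [Field K] {σ : Type} (J : Ideal (MvPolynomial σ K)) : Prop :=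
  ∃ S : Set (MvPolynomial σ K), (∀ f ∈ S, f.IsHomogeneous 1) ∧ J = Ideal.span S

/-- `S` is an antichain under divisibility of monomials, i.e. it is the minimal
monomial generating set `G(I)` of the monomial ideal `I` it generates. -/
def IsMinGenSet {σ : Type} (S : Set (σ →₀ ℕ)) : Prop :=
  ∀ u ∈ S, ∀ v ∈ S, u ≤ v → u = v

/-- A monomial ideal, presented by its minimal monomial generating set `S`, is
quasi-linear if for every `u ∈ S` the colon ideal `(G(I) \ {u}) : u` is generated
by variables. -/
def QuasiLinear (K : Type) [Field K] {σ : Type} (S : Set (σ →₀ ℕ)) : Prop :=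
  ∀ u ∈ S, genByVars (Submodule.colon (monIdeal K (S \ {u})) (Ideal.span {mon K u}))

/-- A minimal graded free resolution of an ideal `I` in a polynomial ring:
graded free modules `F i = ⊕_k R(-dg i k)` of rank `b i`, differentials
`F (i+1) → F i` given by the matrices `A i`, whose entries are homogeneous of the
appropriate degree and of positive degree (this is minimality, i.e. all entries lie
in the graded maximal ideal), together with an augmentation `F 0 → I` given by the
homogeneous generators `g`, everything being exact. -/
structure MinFreeRes {K : Type} [Field K] {σ : Type} (I : Ideal (MvPolynomial σ K)) where
  b : ℕ → ℕ
  dg : (i : ℕ) → Fin (b i) → ℕ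
  g : Fin (b 0) → MvPolynomial σ K
  A : (i : ℕ) → Matrix (Fin (b i)) (Fin (b (i+1))) (MvPolynomial σ K)
  g_hom : ∀ k, (g k).IsHomogeneous (dg 0 k)
  A_hom : ∀ i k l, A i k l = 0 ∨
    ((A i k l).IsHomogeneous (dg (i+1) l - dg i k) ∧ dg i k < dg (i+1) l)
  aug_range : LinearMap.range (Fintype.linearCombination (MvPolynomial σ K)
      g) = I
  aug_exact : LinearMap.ker (Fintype.linearCombination (MvPolynomial σ K)
      g) = LinearMap.range ((A 0).mulVecLin)
  is_exact : ∀ i, LinearMap.ker ((A i).mulVecLin) = LinearMap.range ((A (i+1)).mulVecLin)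

/-- The graded Betti number `β_{i,j}` read off from a minimal graded free resolution:
the number of generators of the `i`-th free module of degree `j`. -/
noncomputable def MinFreeRes.beta {K : Type} [Field K] {σ : Type}
    {I : Ideal (MvPolynomial σ K)} (res : MinFreeRes I) (i j : ℕ) : ℕ :=
  (Finset.univ.filter fun k => res.dg i k = j).card

/-- `I` has a `d`-linear resolution: it has a minimal graded free resolution in which the
`i`-th free module is generated entirely in degree `i + d`, i.e. `β_{i,j}(I) = 0`
whenever `j - i ≠ d`. -/
def HasLinRes {K : Type} [Field K] {σ : Type} (I : Ideal (MvPolynomial σ K))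
    (d : ℕ) : Prop :=
  ∃ res : MinFreeRes I, ∀ i k, res.dg i k = i + d

/-- `reg I ≤ r`: a minimal graded free resolution of `I` has all generators of the
`i`-th free module in degrees `≤ i + r`, i.e. `β_{i,j}(I) = 0` whenever `j - i > r`. -/
def RegLE {K : Type} [Field K] {σ : Type} (I : Ideal (MvPolynomial σ K)) (r : ℕ) : Prop :=
  ∃ res : MinFreeRes I, ∀ i k, res.dg i k ≤ i + r

/-- A monomial ideal `I` is stable if for every monomial `x^w ∈ I` with largest variable
`x_j` dividing it and every `i ≤ j`, the monomial `x^w·x_i/x_j` lies in `I`. -/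
def StableIdeal (K : Type) [Field K] {n : ℕ} (I : Ideal (MvPolynomial (Fin n) K)) : Prop :=
  ∀ w : Fin n →₀ ℕ, mon K w ∈ I → ∀ j : Fin n, w j ≠ 0 → (∀ l, w l ≠ 0 → l ≤ j) →
    ∀ i : Fin n, i ≤ j → mon K (w + Finsupp.single i 1 - Finsupp.single j 1) ∈ I

section StmtAux18
open Finset

variable {K : Type} [Field K] {n : ℕ}

lemma mdeg_eq (u : Fin n →₀ ℕ) : mdeg u = ∑ l, u l :=
  Finsupp.sum_fintype _ _ fun _ => rfl

lemma mem_monIdeal {f : MvPolynomial (Fin n) K} {S : Set (Fin n →₀ ℕ)} :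
    f ∈ monIdeal K S ↔ ∀ m ∈ f.support, ∃ t ∈ S, t ≤ m := by
  unfold monIdeal mon
  exact MvPolynomial.mem_ideal_span_monomial_image

lemma mon_mem_monIdeal {u : Fin n →₀ ℕ} {S : Set (Fin n →₀ ℕ)} (h : ∃ t ∈ S, t ≤ u) :
    mon K u ∈ monIdeal K S := by
  rw [mem_monIdeal]
  intro m hm
  have : m = u := by
    by_cases h1 : (1 : K) = 0
    · simp [mon, support_monomial, h1] at hm
    · exact (by simpa [mon, support_monomial, h1] using hm : u = m).symm
  exact this ▸ h

lemma mon_mem_monIdeal_iff {u : Fin n →₀ ℕ} {S : Set (Fin n →₀ ℕ)} :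
    mon K u ∈ monIdeal K S ↔ ∃ t ∈ S, t ≤ u := by
  refine ⟨fun h => ?_, mon_mem_monIdeal⟩
  have hu : u ∈ (mon K (σ := Fin n) u).support := by
    simp [mon, support_monomial]
  exact mem_monIdeal.mp h u hu

lemma mdeg_add_single (u : Fin n →₀ ℕ) (i : Fin n) :
    mdeg (u + Finsupp.single i 1) = mdeg u + 1 := by
  simp only [mdeg_eq, Finsupp.add_apply, Finsupp.single_apply, Finset.sum_add_distrib]
  rw [Finset.sum_ite_eq]
  simp


lemma mdeg_split (c : Fin n) (u : Fin n →₀ ℕ) :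
    mdeg u = ((∑ l ∈ univ.filter (· < c), u l) + u c) + ∑ l ∈ univ.filter (c < ·), u l := by
  rw [mdeg_eq, ← Finset.sum_filter_add_sum_filter_not univ (· < c) u]
  have h : univ.filter (fun l => ¬ l < c) = insert c (univ.filter (fun l => c < l)) := by
    ext l
    simp only [Finset.mem_filter, Finset.mem_univ, true_and, Finset.mem_insert, not_lt]
    constructor
    · intro h; rcases eq_or_lt_of_le h with h | h
      · exact Or.inl h.symm
      · exact Or.inr h
    · rintro (rfl | h)
      · exact le_refl _
      · exact le_of_lt h
  rw [h, Finset.sum_insert (by simp), add_assoc]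

lemma sub_apply' (w : Fin n →₀ ℕ) (i j l : Fin n) :
    ((w + Finsupp.single i 1 - Finsupp.single j 1 : Fin n →₀ ℕ)) l
      = w l + (if i = l then 1 else 0) - (if j = l then 1 else 0) := by
  rw [Finsupp.tsub_apply, Finsupp.add_apply, Finsupp.single_apply, Finsupp.single_apply]

lemma stable_exchange {S : Set (Fin n →₀ ℕ)} (hst : StableIdeal K (monIdeal K S)) :
    ∀ E : ℕ, ∀ w z : Fin n →₀ ℕ, ∀ c : Fin n,
    mon K w ∈ monIdeal K S →
    (∑ l ∈ univ.filter (fun l => c < l), w l) + (w c - z c) = E →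
    mdeg z = mdeg w → 1 ≤ z c → (∀ l, c < l → z l = 0) →
    (∀ l, l < c → w l ≤ z l) → z c ≤ w c →
    mon K z ∈ monIdeal K S := by
  intro E
  induction E with
  | zero =>
    intro w z c hw hE hdeg hz1 hztop hle hzc
    have h0 : ∀ l, c < l → w l = 0 := by
      intro l hl
      exact Finset.sum_eq_zero_iff.mp (Nat.eq_zero_of_add_eq_zero_right hE) l
        (by simp [hl])
    have hwc : w c = z c := by
      have h1 := Nat.eq_zero_of_add_eq_zero_left hE
      omega
    have hlow : ∀ l, l < c → w l = z l := by
      have hsum : (∑ l ∈ univ.filter (· < c), w l) = ∑ l ∈ univ.filter (· < c), z l := by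
        have h1 := mdeg_split c w
        have h2 := mdeg_split c z
        have h3 : (∑ l ∈ univ.filter (c < ·), w l) = 0 :=
          Finset.sum_eq_zero fun l hl => h0 l (by simpa using hl)
        have h4 : (∑ l ∈ univ.filter (c < ·), z l) = 0 :=
          Finset.sum_eq_zero fun l hl => hztop l (by simpa using hl)
        omega
      intro l hl
      have := (Finset.sum_eq_sum_iff_of_le (s := univ.filter (· < c))
        (f := w) (g := z) (fun i hi => hle i (by simpa using hi))).mp hsum
      exact this l (by simp [hl])
    have hzw : z = w := by
      ext l
      rcases lt_trichotomy l c with h | rfl | h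
      · exact (hlow l h).symm
      · exact hwc.symm
      · rw [hztop l h, h0 l h]
    rwa [hzw]
  | succ E IH =>
    intro w z c hw hE hdeg hz1 hztop hle hzc
    by_cases hex : ∃ l, c < l ∧ w l ≠ 0
    · -- case: something above c
      obtain ⟨l0, hl0c, hl0⟩ := hex
      have hne : w.support.Nonempty := ⟨l0, Finsupp.mem_support_iff.mpr hl0⟩
      set M := w.support.max' hne with hM
      have hwM : w M ≠ 0 := Finsupp.mem_support_iff.mp (w.support.max'_mem hne)
      have hMmax : ∀ l, w l ≠ 0 → l ≤ M := fun l hl =>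
        Finset.le_max' _ _ (Finsupp.mem_support_iff.mpr hl)
      have hcM : c < M := lt_of_lt_of_le hl0c (hMmax _ hl0)
      have hi : ∃ i, i < c ∧ w i < z i := by
        by_contra h
        push_neg at h
        have heq : ∀ i, i < c → w i = z i := fun i hic =>
          le_antisymm (hle i hic) (h i hic)
        have h1 := mdeg_split c w
        have h2 := mdeg_split c z
        have hlowe : (∑ l ∈ univ.filter (· < c), w l) = ∑ l ∈ univ.filter (· < c), z l :=
          Finset.sum_congr rfl fun l hl => heq l (by simpa using hl)
        have h4 : (∑ l ∈ univ.filter (c < ·), z l) = 0 :=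
          Finset.sum_eq_zero fun l hl => hztop l (by simpa using hl)
        have h5 : w c + w M ≤ ∑ l ∈ univ.filter (c < ·), w l + w c := by
          have hsub : ({M} : Finset (Fin n)) ⊆ univ.filter (c < ·) := by
            intro x hx
            simp only [Finset.mem_singleton] at hx
            simp [hx, hcM]
          have := Finset.sum_le_sum_of_subset (f := w) hsub
          simp only [Finset.sum_singleton] at this
          omega
        omega
      obtain ⟨i, hic, hwi⟩ := hi
      have hiM : i ≠ M := ne_of_lt (hic.trans hcM)
      have hw' := hst w hw M hwM hMmax i (le_of_lt (hic.trans hcM))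
      set w' : Fin n →₀ ℕ := w + Finsupp.single i 1 - Finsupp.single M 1 with hw'def
      have hkey : ∀ l, w' l + (if M = l then 1 else 0) = w l + (if i = l then 1 else 0) := by
        intro l
        rw [hw'def, sub_apply']
        have hpos := Nat.pos_of_ne_zero hwM
        by_cases hMl : M = l
        · subst hMl
          rw [if_neg hiM, if_pos (rfl : M = M)]
          omega
        · simp [hMl]
      apply IH w' z c hw' _ _ hz1 hztop _ _
      · -- E
        have hsum : (∑ l ∈ univ.filter (fun l => c < l), w' l) + 1
            = ∑ l ∈ univ.filter (fun l => c < l), w l := by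
          have h1 : (∑ l ∈ univ.filter (fun l => c < l), (w' l + if M = l then 1 else 0))
              = ∑ l ∈ univ.filter (fun l => c < l), (w l + if i = l then 1 else 0) :=
            Finset.sum_congr rfl fun l _ => hkey l
          rw [Finset.sum_add_distrib, Finset.sum_add_distrib, Finset.sum_ite_eq,
            Finset.sum_ite_eq] at h1
          have hMin : M ∈ univ.filter (fun l => c < l) := by simp [hcM]
          have hiout : i ∉ univ.filter (fun l => c < l) := by
            simp only [Finset.mem_filter, Finset.mem_univ, true_and]
            exact not_lt.mpr (le_of_lt hic)
          rw [if_pos hMin, if_neg hiout] at h1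
          omega
        have hwc' : w' c = w c := by
          have := hkey c
          have h1 : M ≠ c := ne_of_gt hcM
          have h2 : i ≠ c := ne_of_lt hic
          rw [if_neg h1, if_neg h2] at this
          omega
        omega
      · -- degree
        rw [hdeg]
        have : (∑ l, w' l) + 1 = (∑ l, w l) + 1 := by
          have h1 : (∑ l, (w' l + if M = l then 1 else 0)) = (∑ l, (w l + if i = l then 1 else 0)) :=
            Finset.sum_congr rfl fun l _ => hkey l
          rw [Finset.sum_add_distrib, Finset.sum_add_distrib, Finset.sum_ite_eq] at h1
          rw [Finset.sum_ite_eq] at h1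
          simpa using h1
        rw [mdeg_eq, mdeg_eq]
        omega
      · intro l hl
        have hk := hkey l
        have h1 : M ≠ l := ne_of_gt (hl.trans hcM)
        rw [if_neg h1] at hk
        by_cases h2 : i = l
        · subst h2; rw [if_pos rfl] at hk; omega
        · rw [if_neg h2] at hk
          have := hle l hl
          omega
      · have hk := hkey c
        rw [if_neg (ne_of_gt hcM), if_neg (ne_of_lt hic)] at hk
        omega
    · -- case: nothing above c
      push_neg at hex
      have hsum0 : (∑ l ∈ univ.filter (fun l => c < l), w l) = 0 :=
        Finset.sum_eq_zero fun l hl => hex l (by simpa using hl)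
      have hwcE : w c - z c = E + 1 := by omega
      have hwc0 : w c ≠ 0 := by omega
      have hmax : ∀ l, w l ≠ 0 → l ≤ c := fun l hl =>
        not_lt.mp (fun hcl => hl (hex l hcl))
      have hi : ∃ i, i < c ∧ w i < z i := by
        by_contra h
        push_neg at h
        have heq : ∀ i, i < c → w i = z i := fun i hic =>
          le_antisymm (hle i hic) (h i hic)
        have h1 := mdeg_split c w
        have h2 := mdeg_split c z
        have hlowe : (∑ l ∈ univ.filter (· < c), w l) = ∑ l ∈ univ.filter (· < c), z l :=
          Finset.sum_congr rfl fun l hl => heq l (by simpa using hl)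
        have h4 : (∑ l ∈ univ.filter (c < ·), z l) = 0 :=
          Finset.sum_eq_zero fun l hl => hztop l (by simpa using hl)
        have h3 : (∑ l ∈ univ.filter (c < ·), w l) = 0 :=
          Finset.sum_eq_zero fun l hl => hex l (by simpa using hl)
        omega
      obtain ⟨i, hic, hwi⟩ := hi
      have hw' := hst w hw c hwc0 hmax i (le_of_lt hic)
      set w' : Fin n →₀ ℕ := w + Finsupp.single i 1 - Finsupp.single c 1 with hw'def
      have hkey : ∀ l, w' l + (if c = l then 1 else 0) = w l + (if i = l then 1 else 0) := by
        intro l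
        rw [hw'def, sub_apply']
        have hpos := Nat.pos_of_ne_zero hwc0
        by_cases hcl : c = l
        · subst hcl
          rw [if_neg (ne_of_lt hic), if_pos (rfl : c = c)]
          omega
        · simp [hcl]
      apply IH w' z c hw' _ _ hz1 hztop _ _
      · have hsum' : (∑ l ∈ univ.filter (fun l => c < l), w' l) = 0 := by
          apply Finset.sum_eq_zero
          intro l hl
          have hcl : c < l := by simpa using hl
          have hk := hkey l
          rw [if_neg (ne_of_lt hcl), if_neg (ne_of_lt (hic.trans hcl))] at hk
          have := hex l hcl
          omega
        have hwc' : w' c + 1 = w c := by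
          have hk := hkey c
          rw [if_pos rfl, if_neg (ne_of_lt hic)] at hk
          omega
        omega
      · rw [hdeg]
        have : (∑ l, w' l) + 1 = (∑ l, w l) + 1 := by
          have h1 : (∑ l, (w' l + if c = l then 1 else 0)) = (∑ l, (w l + if i = l then 1 else 0)) :=
            Finset.sum_congr rfl fun l _ => hkey l
          rw [Finset.sum_add_distrib, Finset.sum_add_distrib, Finset.sum_ite_eq,
            Finset.sum_ite_eq] at h1
          simpa using h1
        rw [mdeg_eq, mdeg_eq]
        omega
      · intro l hl
        have hk := hkey l
        rw [if_neg (ne_of_gt hl)] at hk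
        by_cases h2 : i = l
        · subst h2; rw [if_pos rfl] at hk; omega
        · rw [if_neg h2] at hk
          have := hle l hl
          omega
      · have hk := hkey c
        rw [if_pos rfl, if_neg (ne_of_lt hic)] at hk
        omega

def TSet {n : ℕ} (S : Set (Fin n →₀ ℕ)) {s : ℕ} (V : Fin s → (Fin n →₀ ℕ)) (pn : ℕ) :
    Set (Fin n →₀ ℕ) :=
  S ∪ {w | ∃ q : Fin s, (q : ℕ) < pn ∧ ∃ i, w = V q + Finsupp.single i 1}

lemma mem_TSet {n : ℕ} {S : Set (Fin n →₀ ℕ)} {s : ℕ} {V : Fin s → (Fin n →₀ ℕ)} {pn : ℕ}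
    {w : Fin n →₀ ℕ} :
    w ∈ TSet S V pn ↔ w ∈ S ∨ ∃ q : Fin s, (q : ℕ) < pn ∧ ∃ i, w = V q + Finsupp.single i 1 :=
  Iff.rfl


end StmtAux18

open Finset in
/-- Let `I ≠ 0` be a stable monomial ideal generated in degree `d` and
`𝔪 = (x_1, …, x_n)`.  Then `𝔪^d` is strongly linear over `I`: there is a chain
`I = J_0 ⊆ J_1 ⊆ ⋯ ⊆ J_s = 𝔪^d` in which each `J_{p+1} = J_p + v_p·𝔪` for some monomial
`v_p` of degree `d − 1` such that `J_p : v_p` is generated by variables. -/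
theorem stmt_18 {K : Type} [Field K] {n d : ℕ} (hd : 1 ≤ d) (S : Set (Fin n →₀ ℕ))
    (hdeg : ∀ w ∈ S, mdeg w = d) (hst : StableIdeal K (monIdeal K S))
    (hne : monIdeal K S ≠ ⊥) :
    ∃ (s : ℕ) (J : Fin (s + 1) → Ideal (MvPolynomial (Fin n) K)),
      J 0 = monIdeal K S ∧
      J (Fin.last s) = monIdeal K {w : Fin n →₀ ℕ | mdeg w = d} ∧
      ∀ p : Fin s, ∃ v : Fin n →₀ ℕ, mdeg v = d - 1 ∧
        genByVars (Submodule.colon (J p.castSucc) (Ideal.span {mon K v})) ∧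
        J p.succ = J p.castSucc ⊔
          Ideal.span (Set.range fun i : Fin n => mon K (v + Finsupp.single i 1)) := by
  classical
  set F : Finset (Fin n →₀ ℕ) := ((Finset.univ : Finset (Fin n → Fin d)).image
      (fun g => Finsupp.equivFunOnFinite.symm (fun i => (g i : ℕ)))).filter
      (fun v => mdeg v = d - 1) with hFdef
  have hF : ∀ x : Fin n →₀ ℕ, x ∈ F ↔ mdeg x = d - 1 := by
    intro x
    constructor
    · intro hx; exact (Finset.mem_filter.mp hx).2
    · intro hx
      refine Finset.mem_filter.mpr ⟨?_, hx⟩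
      have hxi : ∀ i, x i < d := by
        intro i
        have h1 : x i ≤ mdeg x := by
          rw [mdeg_eq]
          exact Finset.single_le_sum (fun l _ => Nat.zero_le _) (Finset.mem_univ i)
        omega
      refine Finset.mem_image.mpr ⟨fun i => ⟨x i, hxi i⟩, Finset.mem_univ _, ?_⟩
      exact Finsupp.equivFunOnFinite_symm_coe x
  set FL : Finset (Lex (Fin n →₀ ℕ)) := F.map toLex.toEmbedding with hFLdef
  set s := FL.card with hsdef
  set e := FL.orderIsoOfFin rfl with hedef
  set V : Fin s → (Fin n →₀ ℕ) := fun p => ofLex ((e p.rev : FL) : Lex (Fin n →₀ ℕ)) with hVdef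
  have hVF : ∀ p, V p ∈ F := by
    intro p
    have h := (e p.rev).2
    obtain ⟨x, hxF, hx⟩ := Finset.mem_map.mp h
    have hx2 : V p = x := by
      rw [hVdef]
      simp only [← hx]
      rfl
    rwa [hx2]
  have hVdeg : ∀ p, mdeg (V p) = d - 1 := fun p => (hF _).mp (hVF p)
  have hmono : ∀ p q : Fin s, q < p → toLex (V p) < toLex (V q) := by
    intro p q hqp
    show ((e p.rev : FL) : Lex (Fin n →₀ ℕ)) < ((e q.rev : FL) : Lex (Fin n →₀ ℕ))
    exact Subtype.coe_lt_coe.mpr (e.lt_iff_lt.mpr (Fin.rev_lt_rev.mpr hqp))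
  have hsurj : ∀ x ∈ F, ∃ q : Fin s, V q = x := by
    intro x hx
    have hmem : toLex x ∈ FL := Finset.mem_map.mpr ⟨x, hx, rfl⟩
    obtain ⟨m, hm⟩ := e.surjective ⟨toLex x, hmem⟩
    refine ⟨m.rev, ?_⟩
    show ofLex ((e m.rev.rev : FL) : Lex (Fin n →₀ ℕ)) = x
    rw [Fin.rev_rev, hm]
    rfl
  have hgt : ∀ (p : Fin s) (x : Fin n →₀ ℕ), x ∈ F → toLex (V p) < toLex x →
      ∃ q : Fin s, q < p ∧ V q = x := by
    intro p x hxF hlt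
    obtain ⟨q, rfl⟩ := hsurj x hxF
    refine ⟨q, ?_, rfl⟩
    by_contra h
    rcases eq_or_lt_of_le (not_lt.mp h) with h1 | h1
    · rw [h1] at hlt; exact lt_irrefl _ hlt
    · exact lt_asymm hlt (hmono q p h1)
  refine ⟨s, fun p => monIdeal K (TSet S V (p : ℕ)), ?_, ?_, ?_⟩
  · have h0 : TSet S V ((0 : Fin (s+1)) : ℕ) = S := by
      rw [TSet]
      have : {w : Fin n →₀ ℕ | ∃ q : Fin s, (q : ℕ) < ((0 : Fin (s+1)) : ℕ) ∧
          ∃ i, w = V q + Finsupp.single i 1} = ∅ := by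
        ext w; simp
      rw [this, Set.union_empty]
    exact congrArg (monIdeal K) h0
  · have hlast : TSet S V ((Fin.last s : Fin (s+1)) : ℕ) = {w : Fin n →₀ ℕ | mdeg w = d} := by
      ext w
      rw [mem_TSet]
      simp only [Fin.val_last, Set.mem_setOf_eq]
      constructor
      · rintro (hw | ⟨q, hq, i, rfl⟩)
        · exact hdeg w hw
        · rw [mdeg_add_single, hVdeg]; omega
      · intro hw
        right
        have hex : ∃ i, w i ≠ 0 := by
          by_contra h; push_neg at h
          have h0 : mdeg w = 0 := by
            rw [mdeg_eq]; exact Finset.sum_eq_zero fun i _ => h i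
          omega
        obtain ⟨i, hi⟩ := hex
        have hle : Finsupp.single i 1 ≤ w :=
          Finsupp.single_le_iff.mpr (Nat.one_le_iff_ne_zero.mpr hi)
        have hsub : (w - Finsupp.single i 1 : Fin n →₀ ℕ) + Finsupp.single i 1 = w :=
          tsub_add_cancel_of_le hle
        have hdeg' : mdeg (w - Finsupp.single i 1 : Fin n →₀ ℕ) = d - 1 := by
          have h1 := mdeg_add_single (w - Finsupp.single i 1 : Fin n →₀ ℕ) i
          rw [hsub] at h1; omega
        obtain ⟨q, hq⟩ := hsurj _ ((hF _).mpr hdeg')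
        exact ⟨q, q.is_lt, i, by rw [hq, hsub]⟩
    exact congrArg (monIdeal K) hlast
  · intro p
    have lexTrick : ∀ c b : Fin n, c < b → (V p) b ≠ 0 →
        (V p + Finsupp.single c 1) ∈ TSet S V (p : ℕ) := by
      intro c b hcb hvb
      have hble : Finsupp.single b 1 ≤ V p + Finsupp.single c 1 := by
        rw [Finsupp.single_le_iff, Finsupp.add_apply, Finsupp.single_apply,
          if_neg (ne_of_lt hcb)]
        omega
      have hcanc : (V p + Finsupp.single c 1 - Finsupp.single b 1 : Fin n →₀ ℕ)
          + Finsupp.single b 1 = V p + Finsupp.single c 1 := tsub_add_cancel_of_le hble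
      set v'' : Fin n →₀ ℕ := V p + Finsupp.single c 1 - Finsupp.single b 1 with hv''
      have hv''deg : mdeg v'' = d - 1 := by
        have h1 := mdeg_add_single v'' b
        rw [hcanc, mdeg_add_single, hVdeg] at h1
        omega
      have hv''val : ∀ l, v'' l = (V p) l + (if c = l then 1 else 0)
          - (if b = l then 1 else 0) := fun l => sub_apply' _ _ _ _
      have hlt : toLex (V p) < toLex v'' := by
        refine Finsupp.Lex.lt_iff.mpr ⟨c, fun j hj => ?_, ?_⟩
        · show (V p) j = v'' j
          rw [hv''val j, if_neg (ne_of_gt hj), if_neg (ne_of_gt (hj.trans hcb))]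
          omega
        · show (V p) c < v'' c
          rw [hv''val c, if_pos rfl, if_neg (ne_of_gt hcb)]
          omega
      obtain ⟨q, hqp, hq⟩ := hgt p v'' ((hF _).mpr hv''deg) hlt
      exact Or.inr ⟨q, hqp, b, by rw [hq, hcanc]⟩
    have master : ∀ t ∈ TSet S V (p : ℕ), ∃ c : Fin n, (V p) c < t c ∧
        ∃ t' ∈ TSet S V (p : ℕ), t' ≤ V p + Finsupp.single c 1 := by
      rintro t (htS | ⟨q, hq, i, rfl⟩)
      · have hdt : mdeg t = d := hdeg t htS
        have hCex : ∃ c, (V p) c < t c := by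
          by_contra h; push_neg at h
          have h1 : mdeg t ≤ mdeg (V p) := by
            rw [mdeg_eq, mdeg_eq]; exact Finset.sum_le_sum fun l _ => h l
          rw [hdt, hVdeg] at h1; omega
        obtain ⟨c1, hc1⟩ := hCex
        set C : Finset (Fin n) := univ.filter (fun c => (V p) c < t c) with hCdef
        have hCne : C.Nonempty := ⟨c1, by simp [hCdef, hc1]⟩
        set c0 := C.min' hCne with hc0def
        have hc0 : (V p) c0 < t c0 := (Finset.mem_filter.mp (C.min'_mem hCne)).2
        have hmin : ∀ l, l < c0 → t l ≤ (V p) l := by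
          intro l hl
          by_contra h
          have h1 : c0 ≤ l := C.min'_le l (by simp [hCdef]; omega)
          exact absurd hl (not_lt.mpr h1)
        by_cases hb : ∃ b, c0 < b ∧ (V p) b ≠ 0
        · obtain ⟨b, hcb, hvb⟩ := hb
          exact ⟨c0, hc0, V p + Finsupp.single c0 1, lexTrick c0 b hcb hvb, le_refl _⟩
        · push_neg at hb
          have hz : mon K (V p + Finsupp.single c0 1) ∈ monIdeal K S := by
            apply stable_exchange hst
              ((∑ l ∈ univ.filter (fun l => c0 < l), t l)
                + (t c0 - (V p + Finsupp.single c0 1 : Fin n →₀ ℕ) c0)) t _ c0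
              (Ideal.subset_span ⟨t, htS, rfl⟩) rfl
            · rw [mdeg_add_single, hVdeg, hdt]; omega
            · rw [Finsupp.add_apply, Finsupp.single_apply, if_pos rfl]; omega
            · intro l hl
              rw [Finsupp.add_apply, Finsupp.single_apply, if_neg (ne_of_lt hl), hb l hl]
              rfl
            · intro l hl
              rw [Finsupp.add_apply, Finsupp.single_apply, if_neg (ne_of_gt hl), Nat.add_zero]
              exact hmin l hl
            · rw [Finsupp.add_apply, Finsupp.single_apply, if_pos rfl]; omega
          obtain ⟨t', ht', htle⟩ := mon_mem_monIdeal_iff.mp hz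
          exact ⟨c0, hc0, t', Or.inl ht', htle⟩
      · have hlex : toLex (V p) < toLex (V q) := hmono p q hq
        obtain ⟨c, hcj, hcc⟩ := Finsupp.Lex.lt_iff.mp hlex
        have htc : (V p) c < (V q + Finsupp.single i 1 : Fin n →₀ ℕ) c := by
          have h1 : (V q) c ≤ (V q + Finsupp.single i 1 : Fin n →₀ ℕ) c := by
            rw [Finsupp.add_apply]; omega
          exact lt_of_lt_of_le hcc h1
        have hbex : ∃ b, c < b ∧ (V p) b ≠ 0 := by
          by_contra h; push_neg at h
          have h1 := mdeg_split c (V p)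
          have h2 := mdeg_split c (V q)
          have h3 : (∑ l ∈ univ.filter (c < ·), (V p) l) = 0 :=
            Finset.sum_eq_zero fun l hl => h l (by simpa using hl)
          have h4 : (∑ l ∈ univ.filter (· < c), (V p) l)
              = ∑ l ∈ univ.filter (· < c), (V q) l :=
            Finset.sum_congr rfl fun l hl => hcj l (by simpa using hl)
          have h5 := hVdeg p
          have h6 := hVdeg q
          have h7 : (V p) c < (V q) c := hcc
          omega
        obtain ⟨b, hcb, hvb⟩ := hbex
        exact ⟨c, htc, V p + Finsupp.single c 1, lexTrick c b hcb hvb, le_refl _⟩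
    refine ⟨V p, hVdeg p, ?_, ?_⟩
    · -- colon
      refine ⟨{a : Fin n | ∃ t ∈ TSet S V (p : ℕ), t ≤ V p + Finsupp.single a 1}, ?_⟩
      have hXA : (fun i => (X i : MvPolynomial (Fin n) K)) ''
            {a : Fin n | ∃ t ∈ TSet S V (p : ℕ), t ≤ V p + Finsupp.single a 1}
          = mon K '' ((fun a => Finsupp.single a 1) ''
            {a : Fin n | ∃ t ∈ TSet S V (p : ℕ), t ≤ V p + Finsupp.single a 1}) := by
        rw [Set.image_image]
        rfl
      rw [hXA]
      show Submodule.colon (monIdeal K (TSet S V ((p.castSucc : Fin (s+1)) : ℕ))) _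
          = monIdeal K _
      have hcast : ((p.castSucc : Fin (s+1)) : ℕ) = (p : ℕ) := rfl
      rw [hcast]
      apply le_antisymm
      · intro f hf
        have hfv : f * mon K (V p) ∈ monIdeal K (TSet S V (p : ℕ)) :=
          Ideal.mem_colon_span_singleton.mp hf
        rw [mem_monIdeal]
        intro m hm
        have hsupp : m + V p ∈ (f * mon K (V p)).support := by
          rw [MvPolynomial.mem_support_iff]
          show coeff (m + V p) (f * monomial (V p) 1) ≠ 0
          rw [coeff_mul_monomial]
          simpa using MvPolynomial.mem_support_iff.mp hm
        obtain ⟨t, htT, htle⟩ := mem_monIdeal.mp hfv _ hsupp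
        obtain ⟨c, hvc, hc⟩ := master t htT
        refine ⟨Finsupp.single c 1, ⟨c, hc, rfl⟩, Finsupp.single_le_iff.mpr ?_⟩
        have h1 : t c ≤ (m + V p) c := htle c
        rw [Finsupp.add_apply] at h1
        omega
      · rw [monIdeal, Ideal.span_le]
        rintro y ⟨u, ⟨a, ⟨t, htT, htle⟩, rfl⟩, rfl⟩
        have hmul : mon K (Finsupp.single a 1) * mon K (V p)
            = mon K (V p + Finsupp.single a 1) := by
          rw [mon, mon, mon, monomial_mul, one_mul, add_comm]
        rw [SetLike.mem_coe, Ideal.mem_colon_span_singleton, hmul]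
        exact mon_mem_monIdeal ⟨t, htT, htle⟩
    · -- chain
      have hrange : (Set.range fun i : Fin n => mon K (V p + Finsupp.single i 1))
          = mon K '' {w : Fin n →₀ ℕ | ∃ i, w = V p + Finsupp.single i 1} := by
        ext y
        constructor
        · rintro ⟨i, rfl⟩; exact ⟨_, ⟨i, rfl⟩, rfl⟩
        · rintro ⟨w, ⟨i, rfl⟩, rfl⟩; exact ⟨i, rfl⟩
      have hset : TSet S V ((p.succ : Fin (s+1)) : ℕ)
          = TSet S V ((p.castSucc : Fin (s+1)) : ℕ)
            ∪ {w : Fin n →₀ ℕ | ∃ i, w = V p + Finsupp.single i 1} := by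
        ext w
        rw [Set.mem_union, mem_TSet, mem_TSet]
        simp only [Fin.val_succ, Fin.coe_castSucc, Set.mem_setOf_eq]
        constructor
        · rintro (hw | ⟨q, hq, i, rfl⟩)
          · exact Or.inl (Or.inl hw)
          · rcases Nat.lt_succ_iff_lt_or_eq.mp hq with h | h
            · exact Or.inl (Or.inr ⟨q, h, i, rfl⟩)
            · have hqe : q = p := Fin.ext h
              subst hqe
              exact Or.inr ⟨i, rfl⟩
        · rintro ((hw | ⟨q, hq, i, rfl⟩) | ⟨i, rfl⟩)
          · exact Or.inl hw
          · exact Or.inr ⟨q, Nat.lt_succ_of_lt hq, i, rfl⟩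
          · exact Or.inr ⟨p, Nat.lt_succ_self _, i, rfl⟩
      show monIdeal K _ = monIdeal K _ ⊔ _
      rw [hrange, monIdeal, hset, Set.image_union, Ideal.span_union]
      rfl
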